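/- Let u₁, …, u_k be nonzero vectors in ℝⁿ (k ≥ 1, n ≥ 1). Consider the order-1 star transform whose 2k branch vectors come in pairs of opposite signs, S f = Σ_{i=1}^k (𝒳_{u_i} f + 𝒳_{-u_i} f). Then S is not injective on smooth compactly supported functions: there exists a smooth compactly supported function f : ℝⁿ → ℝ with f ≠ 0 such that (S f)(x) = 0 for every x ∈ ℝⁿ. -/

import Mathlib

open MeasureTheory

/-- The divergent beam transform `𝒳_u f` on `ℝⁿ`:
`(𝒳_u f)(x) = ∫_{-∞}^0 f(x + t • u) dt`. -/
noncomputable def beam {n : ℕ} (u : EuclideanSpace ℝ (Fin n))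
    (f : EuclideanSpace ℝ (Fin n) → ℝ) (x : EuclideanSpace ℝ (Fin n)) : ℝ :=
  ∫ t in Set.Iio (0 : ℝ), f (x + t • u)

section Helpers

variable {E : Type*} [NormedAddCommGroup E] [NormedSpace ℝ E]

/-- Finite difference operator in direction `v`. -/
def diffOp (v : E) (g : E → ℝ) : E → ℝ := fun x => g x - g (x + v)

lemma diffOp_comm (v w : E) (g : E → ℝ) :
    diffOp v (diffOp w g) = diffOp w (diffOp v g) := by
  funext x
  simp only [diffOp]
  rw [add_right_comm x w v]
  ring

lemma diffOp_contDiff {v : E} {g : E → ℝ} (hg : ContDiff ℝ (⊤ : ℕ∞) g) :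
    ContDiff ℝ (⊤ : ℕ∞) (diffOp v g) :=
  hg.sub (hg.comp (contDiff_id.add contDiff_const))

lemma diffOp_hcs {v : E} {g : E → ℝ} (hg : HasCompactSupport g) :
    HasCompactSupport (diffOp v g) := by
  have h2 : HasCompactSupport (fun x => g (x + v)) :=
    hg.comp_homeomorph (Homeomorph.addRight v)
  apply HasCompactSupport.intro (hg.union h2)
  intro x hx
  simp only [Set.mem_union, not_or] at hx
  show g x - g (x + v) = 0
  rw [image_eq_zero_of_notMem_tsupport hx.1, image_eq_zero_of_notMem_tsupport hx.2, sub_zero]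

/-- If `diffOp v g = 0` with `v ≠ 0` and `g` of compact support, then `g = 0`. -/
lemma diffOp_eq_zero {v : E} (hv : v ≠ 0) {g : E → ℝ} (hg : HasCompactSupport g)
    (h : diffOp v g = 0) : g = 0 := by
  have hper : ∀ x : E, g x = g (x + v) := by
    intro x
    have := congrFun h x
    simpa [diffOp, sub_eq_zero] using this
  have hiter : ∀ (m : ℕ) (x : E), g x = g (x + (m : ℝ) • v) := by
    intro m
    induction m with
    | zero => simp
    | succ p ih =>
      intro x
      rw [ih x, hper (x + (p : ℝ) • v)]
      congr 1
      push_cast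
      rw [add_smul, one_smul, add_assoc]
  funext x
  by_contra hx0
  obtain ⟨R, hR⟩ := hg.isBounded.subset_closedBall 0
  have hvpos : 0 < ‖v‖ := norm_pos_iff.mpr hv
  obtain ⟨m, hm⟩ := exists_nat_gt ((R + ‖x‖) / ‖v‖)
  have hmv : R + ‖x‖ < (m : ℝ) * ‖v‖ := by
    rwa [div_lt_iff₀ hvpos] at hm
  have hxm : g (x + (m : ℝ) • v) ≠ 0 := by rw [← hiter m x]; exact hx0
  have hmem : x + (m : ℝ) • v ∈ tsupport g :=
    subset_closure (Function.mem_support.mpr hxm)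
  have hnorm : ‖x + (m : ℝ) • v‖ ≤ R := by
    simpa using mem_closedBall_iff_norm.mp (hR hmem)
  have : (m : ℝ) * ‖v‖ - ‖x‖ ≤ ‖x + (m : ℝ) • v‖ := by
    have := norm_sub_norm_le ((m : ℝ) • v) (-x)
    calc (m : ℝ) * ‖v‖ - ‖x‖ = ‖(m : ℝ) • v‖ - ‖-x‖ := by
          rw [norm_smul, norm_neg]; simp [Nat.abs_cast]
      _ ≤ ‖(m : ℝ) • v - -x‖ := this
      _ = ‖x + (m : ℝ) • v‖ := by rw [sub_neg_eq_add, add_comm]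
  linarith

/-- Iterated finite difference over a list of directions. -/
def iterDiff (l : List E) (g : E → ℝ) : E → ℝ := l.foldr diffOp g

lemma iterDiff_contDiff {l : List E} {g : E → ℝ} (hg : ContDiff ℝ (⊤ : ℕ∞) g) :
    ContDiff ℝ (⊤ : ℕ∞) (iterDiff l g) := by
  induction l with
  | nil => exact hg
  | cons a t ih => exact diffOp_contDiff ih

lemma iterDiff_hcs {l : List E} {g : E → ℝ} (hg : HasCompactSupport g) :
    HasCompactSupport (iterDiff l g) := by
  induction l with
  | nil => exact hg
  | cons a t ih => exact diffOp_hcs ih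

lemma iterDiff_ne_zero {l : List E} (hl : ∀ v ∈ l, v ≠ 0) {g : E → ℝ}
    (hg : HasCompactSupport g) (hg0 : g ≠ 0) : iterDiff l g ≠ 0 := by
  induction l with
  | nil => exact hg0
  | cons a t ih =>
    intro h
    have ht : iterDiff t g = 0 :=
      diffOp_eq_zero (hl a List.mem_cons_self) (iterDiff_hcs hg) h
    exact ih (fun v hv => hl v (List.mem_cons_of_mem a hv)) ht

lemma iterDiff_factor {l : List E} {v : E} (hv : v ∈ l) (g : E → ℝ) :
    ∃ l' : List E, iterDiff l g = diffOp v (iterDiff l' g) := by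
  induction l with
  | nil => simp at hv
  | cons a t ih =>
    rcases List.mem_cons.mp hv with h | h
    · exact ⟨t, by rw [h]; rfl⟩
    · obtain ⟨l', hl'⟩ := ih h
      refine ⟨a :: l', ?_⟩
      show diffOp a (iterDiff t g) = diffOp v (diffOp a (iterDiff l' g))
      rw [hl', diffOp_comm]

end Helpers

section LineIntegrals

variable {n : ℕ}

local notation "Eu" => EuclideanSpace ℝ (Fin n)

/-- The restriction of a continuous compactly supported function to a line is integrable. -/
lemma line_integrable {g : Eu → ℝ} (hgc : Continuous g) (hgs : HasCompactSupport g)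
    {u : Eu} (hu : u ≠ 0) (x : Eu) :
    Integrable (fun t : ℝ => g (x + t • u)) := by
  obtain ⟨R, hR⟩ := hgs.isBounded.subset_closedBall 0
  have hupos : 0 < ‖u‖ := norm_pos_iff.mpr hu
  apply Continuous.integrable_of_hasCompactSupport
  · exact hgc.comp (continuous_const.add (continuous_id.smul continuous_const))
  · apply HasCompactSupport.intro (isCompact_Icc
      (a := -((R + ‖x‖) / ‖u‖)) (b := (R + ‖x‖) / ‖u‖))
    intro t ht
    have habs : (R + ‖x‖) / ‖u‖ < |t| := by
      rcases abs_cases t with ⟨he, _⟩ | ⟨he, _⟩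
      · rw [he]
        by_contra hc
        push_neg at hc
        exact ht ⟨by linarith [abs_nonneg t, he ▸ (neg_abs_le t)], by linarith⟩
      · rw [he]
        by_contra hc
        push_neg at hc
        refine ht ⟨by linarith, by linarith [he ▸ (le_abs_self t)]⟩
    have hRlt : R + ‖x‖ < |t| * ‖u‖ := by
      rw [div_lt_iff₀ hupos] at habs; linarith
    apply Function.notMem_support.mp
    intro hmem
    have hnorm : ‖x + t • u‖ ≤ R := by
      simpa using mem_closedBall_iff_norm.mp (hR (subset_closure hmem))
    have : |t| * ‖u‖ - ‖x‖ ≤ ‖x + t • u‖ := by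
      calc |t| * ‖u‖ - ‖x‖ = ‖t • u‖ - ‖-x‖ := by rw [norm_smul, norm_neg]; rfl
        _ ≤ ‖t • u - -x‖ := norm_sub_norm_le _ _
        _ = ‖x + t • u‖ := by rw [sub_neg_eq_add, add_comm]
    linarith

/-- Key computation: the two opposite beams of `diffOp u h` cancel. -/
lemma beam_pair_zero {h : Eu → ℝ} (hhc : Continuous h) (hhs : HasCompactSupport h)
    {u : Eu} (hu : u ≠ 0) (x : Eu) :
    beam u (diffOp u h) x + beam (-u) (diffOp u h) x = 0 := by
  have hfc : Continuous (diffOp u h) :=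
    hhc.sub (hhc.comp (continuous_id.add continuous_const))
  have hfs : HasCompactSupport (diffOp u h) := diffOp_hcs hhs
  set ψ : ℝ → ℝ := fun t => diffOp u h (x + t • u) with hψ
  have hψint : Integrable ψ := line_integrable hfc hfs hu x
  have h1 : beam (-u) (diffOp u h) x = ∫ t in Set.Ioi (0 : ℝ), ψ t := by
    have heq : ∀ t : ℝ, diffOp u h (x + t • (-u)) = ψ (-t) := by
      intro t
      simp only [hψ, smul_neg, neg_smul]
    rw [beam]
    simp_rw [heq]
    rw [show (∫ t in Set.Iio (0 : ℝ), ψ (-t)) = ∫ t in Set.Iic (0 : ℝ), ψ (-t) from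
      setIntegral_congr_set Iio_ae_eq_Iic]
    rw [integral_comp_neg_Iic, neg_zero]
  have h2 : beam u (diffOp u h) x = ∫ t in Set.Iic (0 : ℝ), ψ t :=
    setIntegral_congr_set Iio_ae_eq_Iic
  rw [h1, h2, intervalIntegral.integral_Iic_add_Ioi hψint.integrableOn hψint.integrableOn]
  have hint1 : Integrable (fun t : ℝ => h (x + t • u)) := line_integrable hhc hhs hu x
  have hint2 : Integrable (fun t : ℝ => h ((x + u) + t • u)) :=
    line_integrable hhc hhs hu (x + u)
  have hψ_eq : ψ = fun t : ℝ => h (x + t • u) - h ((x + u) + t • u) := by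
    funext t
    simp only [hψ, diffOp]
    congr 2
    abel
  rw [hψ_eq, integral_sub hint1 hint2]
  have h3 : (fun t : ℝ => h ((x + u) + t • u)) =
      fun t : ℝ => (fun s : ℝ => h (x + s • u)) (t + 1) := by
    funext t
    simp only
    congr 1
    rw [add_smul, one_smul]
    abel
  rw [h3, integral_add_right_eq_self (fun s : ℝ => h (x + s • u)) 1, sub_self]

end LineIntegrals

/-- an order-1 star transform whose branch vectors come in pairs of
opposite signs, `S f = Σ_i (𝒳_{u_i} f + 𝒳_{-u_i} f)`, is not injective on smooth
compactly supported functions. -/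
theorem star_opposite_pairs_not_injective {n k : ℕ} (hn : 1 ≤ n) (hk : 1 ≤ k)
    (u : Fin k → EuclideanSpace ℝ (Fin n)) (hu : ∀ i, u i ≠ 0) :
    ∃ f : EuclideanSpace ℝ (Fin n) → ℝ, ContDiff ℝ (⊤ : ℕ∞) f ∧
      HasCompactSupport f ∧ f ≠ 0 ∧
      ∀ x, ∑ i, (beam (u i) f x + beam (-u i) f x) = 0 := by
  set g : ContDiffBump (0 : EuclideanSpace ℝ (Fin n)) := ⟨1, 2, one_pos, one_lt_two⟩
  have hg0 : (⇑g : EuclideanSpace ℝ (Fin n) → ℝ) ≠ 0 := by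
    intro hzero
    have h1 : g 0 = 1 := g.one_of_mem_closedBall (Metric.mem_closedBall_self g.rIn_pos.le)
    rw [congrFun hzero 0] at h1
    simpa using h1
  refine ⟨iterDiff (List.ofFn u) ⇑g, iterDiff_contDiff g.contDiff,
    iterDiff_hcs g.hasCompactSupport, ?_, ?_⟩
  · exact iterDiff_ne_zero
      (by intro v hv; obtain ⟨i, rfl⟩ := List.mem_ofFn.mp hv; exact hu i)
      g.hasCompactSupport hg0
  · intro x
    apply Finset.sum_eq_zero
    intro i _
    obtain ⟨l', hl'⟩ := iterDiff_factor (show u i ∈ List.ofFn u from List.mem_ofFn.mpr ⟨i, rfl⟩) (⇑g)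
    rw [hl']
    exact beam_pair_zero (iterDiff_contDiff g.contDiff).continuous
      (iterDiff_hcs g.hasCompactSupport) (hu i) x
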